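/- For every matrix ρ ∈ M_d(ℂ), letting P_{j,k} = |φ_{j,k}⟩⟨φ_{j,k}| ∈ M_{d²}(ℂ) denote the orthogonal projection onto ℂ·φ_{j,k}, one has the teleportation measurement identity Σ_{j,k=0}^{d-1} (P_{j,k} ⊗ I_d)(ρ ⊗ Φ)(P_{j,k} ⊗ I_d) = (1/d²) Σ_{j,k=0}^{d-1} P_{j,k} ⊗ (T_{j,k}^* ρ T_{j,k}), an equality in M_d(ℂ) ⊗ M_{d²}(ℂ) (Kronecker products), where on the left side Φ occupies the last two tensor factors. -/

import Mathlib

open Matrix Complex Kronecker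

noncomputable section

/-- ω = exp(2πi/d). -/
def pauliOmega (d : ℕ) : ℂ := Complex.exp (2 * Real.pi * Complex.I / d)

/-- The generalized Pauli matrix X, with X e_j = ω^j e_j. -/
def pauliX (d : ℕ) : Matrix (Fin d) (Fin d) ℂ :=
  Matrix.diagonal fun j => pauliOmega d ^ (j : ℕ)

/-- The generalized Pauli matrix Z, with Z e_j = e_{j+1 (mod d)}. -/
def pauliZ (d : ℕ) [NeZero d] : Matrix (Fin d) (Fin d) ℂ :=
  Matrix.of fun a b => if a = b + 1 then 1 else 0

/-- T_{j,k} = X^j Z^k. -/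
def pauliT (d : ℕ) [NeZero d] (j k : ℕ) : Matrix (Fin d) (Fin d) ℂ :=
  pauliX d ^ j * pauliZ d ^ k

/-- The coordinates of the maximally entangled vector φ_{j,k} = (T_{j,k} ⊗ I)φ. -/
def phiFun (d : ℕ) [NeZero d] (j k : Fin d) : Fin d × Fin d → ℂ :=
  fun p => if p.1 = p.2 + k then (Real.sqrt d : ℂ)⁻¹ * pauliOmega d ^ ((j : ℕ) * (p.1 : ℕ)) else 0

/-- The density matrix Φ = |φ⟩⟨φ| = (1/d) Σ_{j,k} e_{jk} ⊗ e_{jk} of the maximally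
entangled state, as a matrix in M_d(ℂ) ⊗ M_d(ℂ) via the Kronecker product. -/
def maxEntangled (d : ℕ) : Matrix (Fin d × Fin d) (Fin d × Fin d) ℂ :=
  (d : ℂ)⁻¹ • ∑ j : Fin d, ∑ k : Fin d,
    (Matrix.single j k (1 : ℂ)) ⊗ₖ (Matrix.single j k (1 : ℂ))

/-- The rank-one operator |φ_{j,k}⟩⟨φ_{j',k'}| ∈ M_{d²}(ℂ), sending x to ⟨φ_{j',k'}, x⟩·φ_{j,k}. -/
def phiOuter (d : ℕ) [NeZero d] (j k j' k' : Fin d) :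
    Matrix (Fin d × Fin d) (Fin d × Fin d) ℂ :=
  Matrix.vecMulVec (phiFun d j k) (fun q => star (phiFun d j' k' q))


/-- The orthogonal projection P_{j,k} = |φ_{j,k}⟩⟨φ_{j,k}| onto ℂ·φ_{j,k}. -/
def phiProj (d : ℕ) [NeZero d] (j k : Fin d) : Matrix (Fin d × Fin d) (Fin d × Fin d) ℂ :=
  phiOuter d j k j k

open Fin.NatCast

private lemma pauliZ_pow' (d : ℕ) [NeZero d] (k : ℕ) :
    pauliZ d ^ k = Matrix.of fun a b => if a = b + (k : Fin d) then 1 else 0 := by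
  induction k with
  | zero => ext a b; simp [Matrix.one_apply, eq_comm]
  | succ n ih =>
    rw [pow_succ, ih]
    ext a b
    simp only [Matrix.mul_apply, Matrix.of_apply, pauliZ]
    rw [Finset.sum_eq_single (b + 1)]
    · simp [add_assoc, add_comm (1 : Fin d)]
    · intro c _ hc; simp [hc]
    · simp

private lemma pauliT_apply' (d : ℕ) [NeZero d] (j k : ℕ) (a b : Fin d) :
    pauliT d j k a b = if a = b + (k : Fin d) then pauliOmega d ^ (j * (a : ℕ)) else 0 := by
  rw [pauliT, pauliZ_pow', pauliX, Matrix.diagonal_pow, Matrix.diagonal_mul, Matrix.of_apply]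
  rw [Pi.pow_apply, ← pow_mul, Nat.mul_comm]
  simp [mul_ite]

private lemma maxEntangled_apply' (d : ℕ) (p q : Fin d × Fin d) :
    maxEntangled d p q = if p.1 = p.2 ∧ q.1 = q.2 then (d : ℂ)⁻¹ else 0 := by
  obtain ⟨p1, p2⟩ := p; obtain ⟨q1, q2⟩ := q
  simp [maxEntangled, Matrix.sum_apply, Matrix.single, Finset.sum_ite_eq,
    ite_and, eq_comm]

private lemma teleport_key (d : ℕ) [NeZero d] (ρ : Matrix (Fin d) (Fin d) ℂ) (j k : Fin d) :
    (Matrix.reindex (Equiv.prodAssoc (Fin d) (Fin d) (Fin d))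
          (Equiv.prodAssoc (Fin d) (Fin d) (Fin d))
          (phiProj d j k ⊗ₖ (1 : Matrix (Fin d) (Fin d) ℂ))) *
        (ρ ⊗ₖ maxEntangled d) *
        (Matrix.reindex (Equiv.prodAssoc (Fin d) (Fin d) (Fin d))
          (Equiv.prodAssoc (Fin d) (Fin d) (Fin d))
          (phiProj d j k ⊗ₖ (1 : Matrix (Fin d) (Fin d) ℂ))) =
    ((d : ℂ) ^ 2)⁻¹ • Matrix.reindex (Equiv.prodAssoc (Fin d) (Fin d) (Fin d))
        (Equiv.prodAssoc (Fin d) (Fin d) (Fin d))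
        (phiProj d j k ⊗ₖ ((pauliT d (j : ℕ) (k : ℕ))ᴴ * ρ * pauliT d (j : ℕ) (k : ℕ))) := by
  ext ⟨a, b, c⟩ ⟨a', b', c'⟩
  simp only [Matrix.mul_apply, Matrix.reindex_apply, Matrix.submatrix_apply,
    Equiv.prodAssoc_symm_apply, Matrix.kroneckerMap_apply, Matrix.one_apply,
    maxEntangled_apply', Matrix.smul_apply, Fintype.sum_prod_type, smul_eq_mul]
  simp only [ite_and, mul_ite, mul_zero, mul_one, ite_mul, zero_mul, one_mul,
    Finset.sum_ite_eq, Finset.sum_ite_eq', Finset.mem_univ, if_true,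
    Finset.mul_sum, Finset.sum_mul, Finset.sum_ite_irrel, Finset.sum_const_zero]
  simp only [phiProj, phiOuter, Matrix.vecMulVec_apply, phiFun, Matrix.conjTranspose_apply,
    pauliT_apply', apply_ite (star : ℂ → ℂ), star_zero, star_mul', Fin.cast_val_eq_self,
    mul_ite, mul_zero, ite_mul, zero_mul,
    Finset.sum_ite_eq, Finset.sum_ite_eq', Finset.mem_univ, if_true,
    Finset.sum_ite_irrel, Finset.sum_const_zero]
  have h : ((Real.sqrt d : ℝ) : ℂ) * ((Real.sqrt d : ℝ) : ℂ) = (d : ℂ) := by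
    rw [← Complex.ofReal_mul, Real.mul_self_sqrt (by positivity)]
    simp
  simp only [star_inv₀, Complex.star_def, Complex.conj_ofReal]
  split_ifs with h1 h2 <;> try rfl
  rw [show ((d : ℂ) ^ 2)⁻¹ = ((Real.sqrt d : ℝ) : ℂ)⁻¹ * ((Real.sqrt d : ℝ) : ℂ)⁻¹ * ((d:ℂ))⁻¹ by
    rw [← mul_inv, h, ← mul_inv, sq]]
  ring

/-- The teleportation measurement identity
Σ_{j,k} (P_{j,k} ⊗ I)(ρ ⊗ Φ)(P_{j,k} ⊗ I) = (1/d²) Σ_{j,k} P_{j,k} ⊗ (T_{j,k}^* ρ T_{j,k}). -/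
theorem statement4 (d : ℕ) (hd : 2 ≤ d) [NeZero d] (ρ : Matrix (Fin d) (Fin d) ℂ) :
    ∑ j : Fin d, ∑ k : Fin d,
      (Matrix.reindex (Equiv.prodAssoc (Fin d) (Fin d) (Fin d))
          (Equiv.prodAssoc (Fin d) (Fin d) (Fin d))
          (phiProj d j k ⊗ₖ (1 : Matrix (Fin d) (Fin d) ℂ))) *
        (ρ ⊗ₖ maxEntangled d) *
        (Matrix.reindex (Equiv.prodAssoc (Fin d) (Fin d) (Fin d))
          (Equiv.prodAssoc (Fin d) (Fin d) (Fin d))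
          (phiProj d j k ⊗ₖ (1 : Matrix (Fin d) (Fin d) ℂ))) =
    ((d : ℂ) ^ 2)⁻¹ • ∑ j : Fin d, ∑ k : Fin d,
      Matrix.reindex (Equiv.prodAssoc (Fin d) (Fin d) (Fin d))
        (Equiv.prodAssoc (Fin d) (Fin d) (Fin d))
        (phiProj d j k ⊗ₖ ((pauliT d (j : ℕ) (k : ℕ))ᴴ * ρ * pauliT d (j : ℕ) (k : ℕ))) := by
  simp only [teleport_key d ρ, Finset.smul_sum]
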